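/- Let V_1 and V_2 be distinct subsets of {1,...,m} with V_1 ∩ V_2 ≠ ∅, V_1 ⊄ V_2 and V_2 ⊄ V_1, and set t_k = ∏_{i ∈ V_k} v_i for k = 1, 2. Then t_2 is a zero divisor in the quotient ring ℚ[v_1,...,v_m]/(t_1). In particular (t_1, t_2) is not a regular sequence. -/

import Mathlib

open MvPolynomial

lemma prodX_eq_monomial (m : ℕ) (s : Finset (Fin m)) :
    (∏ i ∈ s, (X i : MvPolynomial (Fin m) ℚ)) =
      monomial (∑ i ∈ s, Finsupp.single i 1) 1 := by
  induction s using Finset.cons_induction with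
  | empty => simp
  | cons a s ha ih =>
      rw [Finset.prod_cons, ih, Finset.sum_cons, X, monomial_mul, one_mul]

lemma sum_single_apply (m : ℕ) (s : Finset (Fin m)) (k : Fin m) :
    (∑ i ∈ s, Finsupp.single i 1) k = if k ∈ s then 1 else 0 := by
  rw [Finset.sum_apply']
  simp [Finsupp.single_apply, Finset.sum_ite_eq]

/-- If `V1, V2 ⊆ {1,…,m}` are distinct, intersect nontrivially, and neither contains the
other, then with `t k = ∏_{i ∈ V k} v_i`, the element `t 2` is a zero divisor in
`ℚ[v_1,…,v_m]/(t 1)`; in particular `(t 1, t 2)` is not a regular sequence. -/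
theorem stmt2 (m : ℕ) (V1 V2 : Finset (Fin m)) (hne : V1 ≠ V2)
    (hint : (V1 ∩ V2).Nonempty) (h12 : ¬ V1 ⊆ V2) (h21 : ¬ V2 ⊆ V1)
    (t1 t2 : MvPolynomial (Fin m) ℚ)
    (ht1 : t1 = ∏ i ∈ V1, X i) (ht2 : t2 = ∏ i ∈ V2, X i) :
    (∃ y : MvPolynomial (Fin m) ℚ ⧸ Ideal.span {t1},
        y ≠ 0 ∧ y * Ideal.Quotient.mk (Ideal.span {t1}) t2 = 0) ∧
    ¬ (t1 ∈ nonZeroDivisors (MvPolynomial (Fin m) ℚ) ∧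
        Ideal.Quotient.mk (Ideal.span {t1}) t2 ∈
          nonZeroDivisors (MvPolynomial (Fin m) ℚ ⧸ Ideal.span {t1})) := by
  obtain ⟨k, hk⟩ := hint
  rw [Finset.mem_inter] at hk
  set p : MvPolynomial (Fin m) ℚ := ∏ i ∈ V1 \ V2, X i with hp
  have hy0 : p ∉ Ideal.span ({t1} : Set (MvPolynomial (Fin m) ℚ)) := by
    rw [Ideal.mem_span_singleton, ht1, hp, prodX_eq_monomial, prodX_eq_monomial,
      monomial_dvd_monomial]
    rintro ⟨h1 | h1, -⟩
    · exact one_ne_zero h1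
    · have := h1 k
      rw [sum_single_apply, sum_single_apply, if_pos hk.1,
        if_neg (by simp [hk.2])] at this
      omega
  have hmul : p * t2 ∈ Ideal.span ({t1} : Set (MvPolynomial (Fin m) ℚ)) := by
    rw [Ideal.mem_span_singleton, ht1, ht2, hp]
    refine ⟨∏ i ∈ V2 \ V1, X i, ?_⟩
    rw [← Finset.prod_union (Finset.sdiff_disjoint.symm),
      ← Finset.prod_union Finset.sdiff_disjoint,
      Finset.sdiff_union_self_eq_union, Finset.union_sdiff_self_eq_union,
      Finset.union_comm]
  have key : (Ideal.Quotient.mk (Ideal.span {t1}) p) ≠ 0 ∧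
      (Ideal.Quotient.mk (Ideal.span {t1}) p) *
        Ideal.Quotient.mk (Ideal.span {t1}) t2 = 0 := by
    constructor
    · rw [Ne, Ideal.Quotient.eq_zero_iff_mem]; exact hy0
    · rw [← map_mul, Ideal.Quotient.eq_zero_iff_mem]; exact hmul
  refine ⟨⟨_, key⟩, fun ⟨_, h2⟩ => key.1 (h2.2 _ key.2)⟩
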